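/- In the group Γ₃ with presentation ⟨a,b,x,y | ax = x⁻¹b, ay = y⁻¹b⁻¹, ay⁻¹ = xa⁻¹, bx = yb⁻¹⟩, the relation a⁹x⁹ = x⁻⁹b⁹ holds. -/

import Mathlib

set_option maxHeartbeats 1000000


namespace Gamma3

/-- generators: 0 ↦ a, 1 ↦ b, 2 ↦ x, 3 ↦ y -/
def a' : FreeGroup (Fin 4) := FreeGroup.of 0
def b' : FreeGroup (Fin 4) := FreeGroup.of 1
def x' : FreeGroup (Fin 4) := FreeGroup.of 2
def y' : FreeGroup (Fin 4) := FreeGroup.of 3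

/-- Relators of Γ₃ = ⟨a,b,x,y | ax = x⁻¹b, ay = y⁻¹b⁻¹, ay⁻¹ = xa⁻¹, bx = yb⁻¹⟩. -/
def rels : Set (FreeGroup (Fin 4)) :=
  { a' * x' * (x'⁻¹ * b')⁻¹,
    a' * y' * (y'⁻¹ * b'⁻¹)⁻¹,
    a' * y'⁻¹ * (x' * a'⁻¹)⁻¹,
    b' * x' * (y' * b'⁻¹)⁻¹ }

/-- The group Γ₃. -/
def Gamma3 := PresentedGroup rels

instance : Group Gamma3 := by unfold Gamma3; infer_instance

def a : Gamma3 := PresentedGroup.of 0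
def b : Gamma3 := PresentedGroup.of 1
def x : Gamma3 := PresentedGroup.of 2
def y : Gamma3 := PresentedGroup.of 3

lemma mk_rel_eq_one : ∀ r ∈ rels, PresentedGroup.mk rels r = 1 := fun r hr =>
  (QuotientGroup.eq_one_iff _).mpr (Subgroup.subset_normalClosure hr)

lemma h1 : a * x * (x⁻¹ * b)⁻¹ = 1 := by
  have := mk_rel_eq_one _ (show a' * x' * (x'⁻¹ * b')⁻¹ ∈ rels by left; rfl)
  simp only [map_mul, map_inv] at this; exact this

lemma h2 : a * y * (y⁻¹ * b⁻¹)⁻¹ = 1 := by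
  have := mk_rel_eq_one _ (show a' * y' * (y'⁻¹ * b'⁻¹)⁻¹ ∈ rels by right; left; rfl)
  simp only [map_mul, map_inv] at this; exact this

lemma h3 : a * y⁻¹ * (x * a⁻¹)⁻¹ = 1 := by
  have := mk_rel_eq_one _ (show a' * y'⁻¹ * (x' * a'⁻¹)⁻¹ ∈ rels by right; right; left; rfl)
  simp only [map_mul, map_inv] at this; exact this

lemma h4 : b * x * (y * b⁻¹)⁻¹ = 1 := by
  have := mk_rel_eq_one _ (show b' * x' * (y' * b'⁻¹)⁻¹ ∈ rels by right; right; right; rfl)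
  simp only [map_mul, map_inv] at this; exact this

lemma rel1p : a * x * b⁻¹ * x = 1 := by
  calc a * x * b⁻¹ * x = a * x * (x⁻¹ * b)⁻¹ := by group
    _ = 1 := h1
lemma rel1n : x⁻¹ * b * x⁻¹ * a⁻¹ = 1 := by
  calc x⁻¹ * b * x⁻¹ * a⁻¹ = (a * x * b⁻¹ * x)⁻¹ := by group
    _ = 1 := by rw [rel1p]; group
lemma rel2p : a * y * b * y = 1 := by
  calc a * y * b * y = a * y * (y⁻¹ * b⁻¹)⁻¹ := by group
    _ = 1 := h2
lemma rel2n : y⁻¹ * b⁻¹ * y⁻¹ * a⁻¹ = 1 := by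
  calc y⁻¹ * b⁻¹ * y⁻¹ * a⁻¹ = (a * y * b * y)⁻¹ := by group
    _ = 1 := by rw [rel2p]; group
lemma rel3p : a * y⁻¹ * a * x⁻¹ = 1 := by
  calc a * y⁻¹ * a * x⁻¹ = a * y⁻¹ * (x * a⁻¹)⁻¹ := by group
    _ = 1 := h3
lemma rel3n : x * a⁻¹ * y * a⁻¹ = 1 := by
  calc x * a⁻¹ * y * a⁻¹ = (a * y⁻¹ * a * x⁻¹)⁻¹ := by group
    _ = 1 := by rw [rel3p]; group
lemma rel4p : b * x * b * y⁻¹ = 1 := by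
  calc b * x * b * y⁻¹ = b * x * (y * b⁻¹)⁻¹ := by group
    _ = 1 := h4
lemma rel4n : y * b⁻¹ * x⁻¹ * b⁻¹ = 1 := by
  calc y * b⁻¹ * x⁻¹ * b⁻¹ = (b * x * b * y⁻¹)⁻¹ := by group
    _ = 1 := by rw [rel4p]; group

def f : Fin 4 → Gamma3
  | 0 => a ^ 3
  | 1 => b ^ 3
  | 2 => x⁻¹ ^ 3
  | 3 => y⁻¹ ^ 3

lemma cube (g : Gamma3) : g ^ 3 = g * g * g := by
  show g ^ (2+1) = g * g * g
  rw [pow_succ, pow_succ, pow_one]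

lemma hf : ∀ r ∈ rels, FreeGroup.lift f r = 1 := by
  intro r hr
  simp only [rels, Set.mem_insert_iff, Set.mem_singleton_iff] at hr
  have L1 : a * a * a * x⁻¹ * x⁻¹ * x⁻¹ * b⁻¹ * b⁻¹ * b⁻¹ * x⁻¹ * x⁻¹ * x⁻¹ = 1 := by
    calc a * a * a * x⁻¹ * x⁻¹ * x⁻¹ * b⁻¹ * b⁻¹ * b⁻¹ * x⁻¹ * x⁻¹ * x⁻¹
      _ = (a * a * a * x⁻¹ * x⁻¹ * x⁻¹ * b⁻¹ * b⁻¹ * y⁻¹) * (y * b⁻¹ * x⁻¹ * b⁻¹) * (y * y⁻¹ * b * x * b * b⁻¹ * x⁻¹ * x⁻¹ * x⁻¹) := by group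
      _ = (a * a * a * x⁻¹ * x⁻¹ * x⁻¹ * b⁻¹ * b⁻¹ * y⁻¹) * 1 * (y * y⁻¹ * b * x * b * b⁻¹ * x⁻¹ * x⁻¹ * x⁻¹) := by rw [rel4n]
      _ = (a * a * a * x⁻¹ * x⁻¹ * x⁻¹ * b⁻¹ * y) * (y⁻¹ * b⁻¹ * y⁻¹ * a⁻¹) * (y⁻¹ * y * a * y * b * b⁻¹ * y⁻¹ * b * x⁻¹ * x⁻¹) := by group
      _ = (a * a * a * x⁻¹ * x⁻¹ * x⁻¹ * b⁻¹ * y) * 1 * (y⁻¹ * y * a * y * b * b⁻¹ * y⁻¹ * b * x⁻¹ * x⁻¹) := by rw [rel2n]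
      _ = (a * a * a * x⁻¹ * x⁻¹ * x⁻¹ * b⁻¹) * (y * b⁻¹ * x⁻¹ * b⁻¹) * (b * x * b * y⁻¹ * y * a * b * x⁻¹ * x⁻¹) := by group
      _ = (a * a * a * x⁻¹ * x⁻¹ * x⁻¹ * b⁻¹) * 1 * (b * x * b * y⁻¹ * y * a * b * x⁻¹ * x⁻¹) := by rw [rel4n]
      _ = (a * a * a * x⁻¹ * x⁻¹ * b * a * x) * (x⁻¹ * b * x⁻¹ * a⁻¹) * (x⁻¹ * x * a * x * b⁻¹ * b * x⁻¹ * x⁻¹) := by group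
      _ = (a * a * a * x⁻¹ * x⁻¹ * b * a * x) * 1 * (x⁻¹ * x * a * x * b⁻¹ * b * x⁻¹ * x⁻¹) := by rw [rel1n]
      _ = (a * a * a * x⁻¹ * x⁻¹ * b) * (a * x * b⁻¹ * x) * (x⁻¹ * b * x⁻¹ * a⁻¹ * a * x * a * x⁻¹) := by group
      _ = (a * a * a * x⁻¹ * x⁻¹ * b) * 1 * (x⁻¹ * b * x⁻¹ * a⁻¹ * a * x * a * x⁻¹) := by rw [rel1p]
      _ = (a * a * a * x⁻¹) * (x⁻¹ * b * x⁻¹ * a⁻¹) * (a * x * b⁻¹ * x * x⁻¹ * b * x⁻¹ * b * a * x⁻¹) := by group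
      _ = (a * a * a * x⁻¹) * 1 * (a * x * b⁻¹ * x * x⁻¹ * b * x⁻¹ * b * a * x⁻¹) := by rw [rel1n]
      _ = (a * a * a * x⁻¹) * (a * y⁻¹ * a * x⁻¹) * (x * a⁻¹ * y * a⁻¹ * a * b * a * x⁻¹) := by group
      _ = (a * a * a * x⁻¹) * 1 * (x * a⁻¹ * y * a⁻¹ * a * b * a * x⁻¹) := by rw [rel3p]
      _ = (a) * (a * y * b * y) * (y⁻¹ * b⁻¹ * y⁻¹ * a⁻¹ * a * y * b * a * x⁻¹) := by group
      _ = (a) * 1 * (y⁻¹ * b⁻¹ * y⁻¹ * a⁻¹ * a * y * b * a * x⁻¹) := by rw [rel2p]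
      _ = ((1:Gamma3)) * (a * y⁻¹ * a * x⁻¹) * (x * a⁻¹ * y * a⁻¹ * a * y⁻¹ * a * x⁻¹) := by group
      _ = ((1:Gamma3)) * 1 * (x * a⁻¹ * y * a⁻¹ * a * y⁻¹ * a * x⁻¹) := by rw [rel3p]
      _ = 1 := by group
  have L2 : a * a * a * y⁻¹ * y⁻¹ * y⁻¹ * b * b * b * y⁻¹ * y⁻¹ * y⁻¹ = 1 := by
    calc a * a * a * y⁻¹ * y⁻¹ * y⁻¹ * b * b * b * y⁻¹ * y⁻¹ * y⁻¹
      _ = (a * a * a * y⁻¹ * y⁻¹ * y⁻¹ * b * b * b * y⁻¹) * (b * x * b * y⁻¹) * (y * b⁻¹ * x⁻¹ * b⁻¹ * y⁻¹ * y⁻¹) := by group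
      _ = (a * a * a * y⁻¹ * y⁻¹ * y⁻¹ * b * b * b * y⁻¹) * 1 * (y * b⁻¹ * x⁻¹ * b⁻¹ * y⁻¹ * y⁻¹) := by rw [rel4p]
      _ = (a * a * a * y⁻¹ * y⁻¹ * y⁻¹ * b * x) * (x⁻¹ * b * x⁻¹ * a⁻¹) * (x⁻¹ * x * a * x * b⁻¹ * b * x⁻¹ * b⁻¹ * y⁻¹ * y⁻¹) := by group
      _ = (a * a * a * y⁻¹ * y⁻¹ * y⁻¹ * b * x) * 1 * (x⁻¹ * x * a * x * b⁻¹ * b * x⁻¹ * b⁻¹ * y⁻¹ * y⁻¹) := by rw [rel1n]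
      _ = (a * a * a * y⁻¹ * y⁻¹ * y⁻¹) * (b * x * b * y⁻¹) * (y * b⁻¹ * x⁻¹ * b⁻¹ * b * x * a * b⁻¹ * y⁻¹ * y⁻¹) := by group
      _ = (a * a * a * y⁻¹ * y⁻¹ * y⁻¹) * 1 * (y * b⁻¹ * x⁻¹ * b⁻¹ * b * x * a * b⁻¹ * y⁻¹ * y⁻¹) := by rw [rel4p]
      _ = (a * a * a * y⁻¹ * y⁻¹ * b⁻¹ * a * y) * (y⁻¹ * b⁻¹ * y⁻¹ * a⁻¹) * (y⁻¹ * y * a * y * b * b⁻¹ * y⁻¹ * y⁻¹) := by group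
      _ = (a * a * a * y⁻¹ * y⁻¹ * b⁻¹ * a * y) * 1 * (y⁻¹ * y * a * y * b * b⁻¹ * y⁻¹ * y⁻¹) := by rw [rel2n]
      _ = (a * a * a * y⁻¹ * y⁻¹ * b⁻¹) * (a * y * b * y) * (y⁻¹ * b⁻¹ * y⁻¹ * a⁻¹ * a * y * a * y⁻¹) := by group
      _ = (a * a * a * y⁻¹ * y⁻¹ * b⁻¹) * 1 * (y⁻¹ * b⁻¹ * y⁻¹ * a⁻¹ * a * y * a * y⁻¹) := by rw [rel2p]
      _ = (a * a * a * y⁻¹) * (y⁻¹ * b⁻¹ * y⁻¹ * a⁻¹) * (a * y * b * y * y⁻¹ * b⁻¹ * y⁻¹ * b⁻¹ * a * y⁻¹) := by group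
      _ = (a * a * a * y⁻¹) * 1 * (a * y * b * y * y⁻¹ * b⁻¹ * y⁻¹ * b⁻¹ * a * y⁻¹) := by rw [rel2n]
      _ = (a * a) * (a * y⁻¹ * a * x⁻¹) * (x * a⁻¹ * y * a⁻¹ * a * y⁻¹ * a * b⁻¹ * a * y⁻¹) := by group
      _ = (a * a) * 1 * (x * a⁻¹ * y * a⁻¹ * a * y⁻¹ * a * b⁻¹ * a * y⁻¹) := by rw [rel3p]
      _ = (a) * (a * x * b⁻¹ * x) * (x⁻¹ * b * x⁻¹ * a⁻¹ * a * x * b⁻¹ * a * y⁻¹) := by group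
      _ = (a) * 1 * (x⁻¹ * b * x⁻¹ * a⁻¹ * a * x * b⁻¹ * a * y⁻¹) := by rw [rel1p]
      _ = (a * x⁻¹) * (a * y⁻¹ * a * x⁻¹) * (x * a⁻¹ * y * a⁻¹ * a * y⁻¹) := by group
      _ = (a * x⁻¹) * 1 * (x * a⁻¹ * y * a⁻¹ * a * y⁻¹) := by rw [rel3p]
      _ = 1 := by group
  have L3 : a * a * a * y * y * y * a * a * a * x * x * x = 1 := by
    calc a * a * a * y * y * y * a * a * a * x * x * x
      _ = (a * a) * (a * y * b * y) * (y⁻¹ * b⁻¹ * y⁻¹ * a⁻¹ * a * y * y * y * a * a * a * x * x * x) := by group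
      _ = (a * a) * 1 * (y⁻¹ * b⁻¹ * y⁻¹ * a⁻¹ * a * y * y * y * a * a * a * x * x * x) := by rw [rel2p]
      _ = (a * a * y⁻¹ * b⁻¹ * y * y) * (a * y * b * y) * (y⁻¹ * b⁻¹ * y⁻¹ * a⁻¹ * a * a * a * x * x * x) := by group
      _ = (a * a * y⁻¹ * b⁻¹ * y * y) * 1 * (y⁻¹ * b⁻¹ * y⁻¹ * a⁻¹ * a * a * a * x * x * x) := by rw [rel2p]
      _ = (a * a * y⁻¹ * b⁻¹) * (y * b⁻¹ * x⁻¹ * b⁻¹) * (b * x * b * y⁻¹ * y * b⁻¹ * y⁻¹ * a * a * x * x * x) := by group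
      _ = (a * a * y⁻¹ * b⁻¹) * 1 * (b * x * b * y⁻¹ * y * b⁻¹ * y⁻¹ * a * a * x * x * x) := by rw [rel4n]
      _ = (a * a * y⁻¹ * x * y⁻¹ * a) * (a * x * b⁻¹ * x) * (x⁻¹ * b * x⁻¹ * a⁻¹ * a * x * x * x) := by group
      _ = (a * a * y⁻¹ * x * y⁻¹ * a) * 1 * (x⁻¹ * b * x⁻¹ * a⁻¹ * a * x * x * x) := by rw [rel1p]
      _ = (a * a * y⁻¹ * x * y⁻¹ * a * x⁻¹) * (a * y⁻¹ * a * x⁻¹) * (x * a⁻¹ * y * a⁻¹ * b * x * x) := by group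
      _ = (a * a * y⁻¹ * x * y⁻¹ * a * x⁻¹) * 1 * (x * a⁻¹ * y * a⁻¹ * b * x * x) := by rw [rel3p]
      _ = (a * a * y⁻¹) * (x * a⁻¹ * y * a⁻¹) * (a * y⁻¹ * a * x⁻¹ * x * a⁻¹ * b * x * x) := by group
      _ = (a * a * y⁻¹) * 1 * (a * y⁻¹ * a * x⁻¹ * x * a⁻¹ * b * x * x) := by rw [rel3n]
      _ = (a * a * y⁻¹ * a * y⁻¹) * (b * x * b * y⁻¹) * (y * b⁻¹ * x⁻¹ * b⁻¹ * b * x * x) := by group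
      _ = (a * a * y⁻¹ * a * y⁻¹) * 1 * (y * b⁻¹ * x⁻¹ * b⁻¹ * b * x * x) := by rw [rel4p]
      _ = (a) * (a * y⁻¹ * a * x⁻¹) * (x * a⁻¹ * y * a⁻¹ * a * y⁻¹ * a * b⁻¹ * x) := by group
      _ = (a) * 1 * (x * a⁻¹ * y * a⁻¹ * a * y⁻¹ * a * b⁻¹ * x) := by rw [rel3p]
      _ = ((1:Gamma3)) * (a * x * b⁻¹ * x) * (x⁻¹ * b * x⁻¹ * a⁻¹ * a * x * b⁻¹ * x) := by group
      _ = ((1:Gamma3)) * 1 * (x⁻¹ * b * x⁻¹ * a⁻¹ * a * x * b⁻¹ * x) := by rw [rel1p]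
      _ = 1 := by group
  have L4 : b * b * b * x⁻¹ * x⁻¹ * x⁻¹ * b * b * b * y * y * y = 1 := by
    calc b * b * b * x⁻¹ * x⁻¹ * x⁻¹ * b * b * b * y * y * y
      _ = (b * b * b * x⁻¹ * x⁻¹ * x⁻¹ * b * b * b * y) * (a * y * b * y) * (y⁻¹ * b⁻¹ * y⁻¹ * a⁻¹ * y * y) := by group
      _ = (b * b * b * x⁻¹ * x⁻¹ * x⁻¹ * b * b * b * y) * 1 * (y⁻¹ * b⁻¹ * y⁻¹ * a⁻¹ * y * y) := by rw [rel2p]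
      _ = (b * b * b * x⁻¹ * x⁻¹ * x⁻¹ * b * b * y⁻¹) * (b * x * b * y⁻¹) * (y * b⁻¹ * x⁻¹ * b⁻¹ * a⁻¹ * y * y) := by group
      _ = (b * b * b * x⁻¹ * x⁻¹ * x⁻¹ * b * b * y⁻¹) * 1 * (y * b⁻¹ * x⁻¹ * b⁻¹ * a⁻¹ * y * y) := by rw [rel4p]
      _ = (b * b * b * x⁻¹ * x⁻¹) * (x⁻¹ * b * x⁻¹ * a⁻¹) * (a * x * b⁻¹ * x * x⁻¹ * b * x⁻¹ * b⁻¹ * a⁻¹ * y * y) := by group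
      _ = (b * b * b * x⁻¹ * x⁻¹) * 1 * (a * x * b⁻¹ * x * x⁻¹ * b * x⁻¹ * b⁻¹ * a⁻¹ * y * y) := by rw [rel1n]
      _ = (b * b * b * x⁻¹ * x⁻¹ * a * b⁻¹ * x⁻¹) * (x * a⁻¹ * y * a⁻¹) * (x * x⁻¹ * a * y⁻¹ * a * a⁻¹ * y * y) := by group
      _ = (b * b * b * x⁻¹ * x⁻¹ * a * b⁻¹ * x⁻¹) * 1 * (x * x⁻¹ * a * y⁻¹ * a * a⁻¹ * y * y) := by rw [rel3n]
      _ = (b * b * b * x⁻¹ * x⁻¹ * a * y⁻¹) * (y * b⁻¹ * x⁻¹ * b⁻¹) * (y * y⁻¹ * b * x * b * b⁻¹ * x⁻¹ * a * y) := by group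
      _ = (b * b * b * x⁻¹ * x⁻¹ * a * y⁻¹) * 1 * (y * y⁻¹ * b * x * b * b⁻¹ * x⁻¹ * a * y) := by rw [rel4n]
      _ = (b * b * b * x⁻¹ * x⁻¹) * (a * y⁻¹ * a * x⁻¹) * (x * a⁻¹ * y * a⁻¹ * a * y⁻¹ * b * a * y) := by group
      _ = (b * b * b * x⁻¹ * x⁻¹) * 1 * (x * a⁻¹ * y * a⁻¹ * a * y⁻¹ * b * a * y) := by rw [rel3p]
      _ = (b * b * b * x⁻¹ * a⁻¹) * (x⁻¹ * b * x⁻¹ * a⁻¹) * (a * x * b⁻¹ * x * b * a * y) := by group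
      _ = (b * b * b * x⁻¹ * a⁻¹) * 1 * (a * x * b⁻¹ * x * b * a * y) := by rw [rel1n]
      _ = (b) * (b * x * b * y⁻¹) * (y * b⁻¹ * x⁻¹ * b⁻¹ * b * x * b * a * y) := by group
      _ = (b) * 1 * (y * b⁻¹ * x⁻¹ * b⁻¹ * b * x * b * a * y) := by rw [rel4p]
      _ = (b * y) * (a * y * b * y) * (y⁻¹ * b⁻¹ * y⁻¹ * a⁻¹ * a * y) := by group
      _ = (b * y) * 1 * (y⁻¹ * b⁻¹ * y⁻¹ * a⁻¹ * a * y) := by rw [rel2p]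
      _ = 1 := by group

  have L1' : a ^ 3 * x⁻¹ ^ 3 * b⁻¹ ^ 3 * x⁻¹ ^ 3 = 1 := by
    simp only [cube]; simpa only [mul_assoc] using L1
  have L2' : a ^ 3 * y⁻¹ ^ 3 * b ^ 3 * y⁻¹ ^ 3 = 1 := by
    simp only [cube]; simpa only [mul_assoc] using L2
  have L3' : a ^ 3 * y ^ 3 * a ^ 3 * x ^ 3 = 1 := by
    simp only [cube]; simpa only [mul_assoc] using L3
  have L4' : b ^ 3 * x⁻¹ ^ 3 * b ^ 3 * y ^ 3 = 1 := by
    simp only [cube]; simpa only [mul_assoc] using L4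
  rcases hr with rfl | rfl | rfl | rfl
  · calc FreeGroup.lift f (a' * x' * (x'⁻¹ * b')⁻¹)
      _ = a ^ 3 * x⁻¹ ^ 3 * ((x⁻¹ ^ 3)⁻¹ * b ^ 3)⁻¹ := by
          simp [a', b', x', y', f]
      _ = a ^ 3 * x⁻¹ ^ 3 * b⁻¹ ^ 3 * x⁻¹ ^ 3 := by group
      _ = 1 := L1'
  · calc FreeGroup.lift f (a' * y' * (y'⁻¹ * b'⁻¹)⁻¹)
      _ = a ^ 3 * y⁻¹ ^ 3 * ((y⁻¹ ^ 3)⁻¹ * (b ^ 3)⁻¹)⁻¹ := by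
          simp [a', b', x', y', f]
      _ = a ^ 3 * y⁻¹ ^ 3 * b ^ 3 * y⁻¹ ^ 3 := by group
      _ = 1 := L2'
  · calc FreeGroup.lift f (a' * y'⁻¹ * (x' * a'⁻¹)⁻¹)
      _ = a ^ 3 * (y⁻¹ ^ 3)⁻¹ * (x⁻¹ ^ 3 * (a ^ 3)⁻¹)⁻¹ := by
          simp [a', b', x', y', f]
      _ = a ^ 3 * y ^ 3 * a ^ 3 * x ^ 3 := by group
      _ = 1 := L3'
  · calc FreeGroup.lift f (b' * x' * (y' * b'⁻¹)⁻¹)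
      _ = b ^ 3 * x⁻¹ ^ 3 * (y⁻¹ ^ 3 * (b ^ 3)⁻¹)⁻¹ := by
          simp [a', b', x', y', f]
      _ = b ^ 3 * x⁻¹ ^ 3 * b ^ 3 * y ^ 3 := by group
      _ = 1 := L4'


noncomputable def phi : Gamma3 →* Gamma3 := PresentedGroup.toGroup hf

lemma phia : phi a = a ^ 3 := PresentedGroup.toGroup.of hf
lemma phib : phi b = b ^ 3 := PresentedGroup.toGroup.of hf
lemma phix : phi x = x⁻¹ ^ 3 := PresentedGroup.toGroup.of hf

/-- The relation a⁹x⁹ = x⁻⁹b⁹ holds in Γ₃. -/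
theorem a9x9 : a ^ 9 * x ^ 9 = x⁻¹ ^ 9 * b ^ 9 := by
  have h1' : a * x = x⁻¹ * b := by
    have := h1
    calc a * x = (a * x * (x⁻¹ * b)⁻¹) * (x⁻¹ * b) := by group
      _ = x⁻¹ * b := by rw [this]; group
  have qa : phi (a * x) = a ^ 3 * x⁻¹ ^ 3 := by rw [map_mul, phia, phix]
  have qb : phi (x⁻¹ * b) = x ^ 3 * b ^ 3 := by
    rw [map_mul, map_inv, phix, phib]; group
  have t1 : a ^ 3 * x⁻¹ ^ 3 = x ^ 3 * b ^ 3 := by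
    rw [← qa, ← qb, h1']
  have pa : phi (a ^ 3 * x⁻¹ ^ 3) = a ^ 9 * x ^ 9 := by
    rw [map_mul, map_pow, map_pow, map_inv, phia, phix]; group
  have pb : phi (x ^ 3 * b ^ 3) = x⁻¹ ^ 9 * b ^ 9 := by
    rw [map_mul, map_pow, map_pow, phix, phib]; group
  rw [← pa, ← pb, t1]

end Gamma3
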